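/- arXiv:2512.22620 — 3 statements merged into one kernel-verified Lean document; each statement's English description precedes it below -/
import Mathlib

section
/- Let X and X̄ be complex p×q matrices and let Y and Ȳ be p×p Hermitian positive definite complex matrices. Then ln det(I + Xᴴ Y⁻¹ X) ≥ ln det(I + X̄ᴴ Ȳ⁻¹ X̄) − Tr(X̄ᴴ Ȳ⁻¹ X̄) + 2 Re(Tr(X̄ᴴ Ȳ⁻¹ X)) − Tr((Ȳ + X̄ X̄ᴴ)⁻¹ X̄ X̄ᴴ Ȳ⁻¹ (Y + X X ᴴ)), where both determinants are positive reals (since I + Xᴴ Y⁻¹ X and I + X̄ᴴ Ȳ⁻¹ X̄ are Hermitian positive definite) and both trace expressions other than the Re-trace term are real. -/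
open Matrix ComplexOrder

variable {n : Type*} [Fintype n] [DecidableEq n]

lemma trace_eq_sum_eigs {A : Matrix n n ℂ} (hA : A.IsHermitian) :
    A.trace = ((∑ i, hA.eigenvalues i : ℝ) : ℂ) := by
  conv_lhs => rw [hA.spectral_theorem, Unitary.conjStarAlgAut_apply]
  rw [Matrix.trace_mul_cycle]
  have h1 : (star (Matrix.IsHermitian.eigenvectorUnitary hA : Matrix n n ℂ)) *
      (Matrix.IsHermitian.eigenvectorUnitary hA : Matrix n n ℂ) = 1 :=
    Matrix.mem_unitaryGroup_iff'.mp (Matrix.IsHermitian.eigenvectorUnitary hA).2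
  rw [h1, one_mul, Matrix.trace_diagonal]
  push_cast
  rfl

lemma det_re_im {A : Matrix n n ℂ} (hA : A.PosDef) : 0 < A.det.re ∧ A.det.im = 0 := by
  have h := hA.det_pos
  rw [Complex.lt_def] at h
  exact ⟨by simpa using h.1, by simpa using h.2.symm⟩

lemma logdet_le_trace {A : Matrix n n ℂ} (hA : A.PosDef) :
    Real.log A.det.re ≤ A.trace.re - Fintype.card n := by
  have hdet : A.det = ((∏ i, hA.1.eigenvalues i : ℝ) : ℂ) := by
    rw [hA.1.det_eq_prod_eigenvalues]; push_cast; rfl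
  have htr := trace_eq_sum_eigs hA.1
  rw [hdet, htr]
  simp only [Complex.ofReal_re]
  rw [Real.log_prod (fun i _ => (hA.eigenvalues_pos i).ne')]
  calc ∑ i, Real.log (hA.1.eigenvalues i)
      ≤ ∑ i, (hA.1.eigenvalues i - 1) :=
        Finset.sum_le_sum fun i _ => Real.log_le_sub_one_of_pos (hA.eigenvalues_pos i)
    _ = _ := by rw [Finset.sum_sub_distrib]; simp

lemma posDef_conj {B C : Matrix n n ℂ} (hB : B.PosDef) (hC : IsUnit C.det) :
    (Cᴴ * B * C).PosDef := by
  have hinj := Matrix.mulVec_injective_iff_isUnit.mpr ((Matrix.isUnit_iff_isUnit_det C).mpr hC)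
  exact hB.conjTranspose_mul_mul_same hinj

lemma psd_trace_re_nonneg {A : Matrix n n ℂ} (hA : A.PosSemidef) : 0 ≤ A.trace.re := by
  rw [trace_eq_sum_eigs hA.1]
  simpa using Finset.sum_nonneg fun i _ => hA.eigenvalues_nonneg i

open scoped MatrixOrder in
lemma trace_mul_psd_nonneg {A B : Matrix n n ℂ} (hA : A.PosSemidef) (hB : B.PosSemidef) :
    0 ≤ (A * B).trace.re := by
  set R := CFC.sqrt A with hRdef
  have hRH : R.IsHermitian := (Matrix.nonneg_iff_posSemidef.mp (CFC.sqrt_nonneg A)).1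
  have h1 : A * B = R * (R * B) := by
    rw [← Matrix.mul_assoc, CFC.sqrt_mul_sqrt_self A (Matrix.nonneg_iff_posSemidef.mpr hA)]
  have h2 : (A * B).trace = (Rᴴ * B * R).trace := by
    rw [h1, Matrix.trace_mul_comm, hRH.eq, Matrix.mul_assoc]
  rw [h2]
  exact psd_trace_re_nonneg (hB.conjTranspose_mul_mul_same R)

open scoped MatrixOrder in
lemma key_ineq {A B : Matrix n n ℂ} (hA : A.PosDef) (hB : B.PosDef) :
    Real.log A.det.re + Real.log B.det.re ≤ (A * B).trace.re - Fintype.card n := by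
  set R := CFC.sqrt A with hRdef
  have hRH : R.IsHermitian := (Matrix.nonneg_iff_posSemidef.mp (CFC.sqrt_nonneg A)).1
  have hRR : R * R = A := CFC.sqrt_mul_sqrt_self A (Matrix.nonneg_iff_posSemidef.mpr hA.posSemidef)
  have hRdet : IsUnit R.det := by
    have : R.det * R.det = A.det := by rw [← Matrix.det_mul, hRR]
    have hAdet : A.det ≠ 0 := hA.det_pos.ne'
    exact isUnit_iff_ne_zero.mpr fun h => hAdet (by rw [← this, h, mul_zero])
  have hC : (Rᴴ * B * R).PosDef := posDef_conj hB hRdet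
  have hdet : (Rᴴ * B * R).det = A.det * B.det := by
    rw [Matrix.det_mul, Matrix.det_mul, hRH.eq, mul_comm R.det B.det, mul_assoc,
      ← Matrix.det_mul, hRR, mul_comm]
  have htr : (Rᴴ * B * R).trace = (A * B).trace := by
    rw [hRH.eq, Matrix.mul_assoc, Matrix.trace_mul_comm, Matrix.mul_assoc, hRR,
      Matrix.trace_mul_comm]
  have h := logdet_le_trace hC
  rw [hdet, htr] at h
  have hre : (A.det * B.det).re = A.det.re * B.det.re := by
    rw [Complex.mul_re, (det_re_im hA).2, (det_re_im hB).2]; ring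
  rw [hre, Real.log_mul (det_re_im hA).1.ne' (det_re_im hB).1.ne'] at h
  exact h

lemma trace_herm_mul_im {A B : Matrix n n ℂ} (hA : A.IsHermitian) (hB : B.IsHermitian) :
    (A * B).trace.im = 0 := by
  have h : star (A * B).trace = (A * B).trace := by
    rw [← Matrix.trace_conjTranspose, Matrix.conjTranspose_mul, hA.eq, hB.eq,
      Matrix.trace_mul_comm]
  rw [← Complex.conj_eq_iff_im]
  exact h

lemma herm_trace_im {A : Matrix n n ℂ} (hA : A.IsHermitian) : A.trace.im = 0 := by
  rw [trace_eq_sum_eigs hA]; simp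

lemma idA {m : Type*} [Fintype m] [DecidableEq m] (X : Matrix n m ℂ) {Y : Matrix n n ℂ}
    (hY : Y.PosDef) :
    (1 + Xᴴ * Y⁻¹ * X) * (Xᴴ * (Y + X * Xᴴ)⁻¹) = Xᴴ * Y⁻¹ := by
  have hS : (Y + X * Xᴴ).PosDef := hY.add_posSemidef (Matrix.posSemidef_self_mul_conjTranspose X)
  have hSdet : IsUnit (Y + X * Xᴴ).det := hS.det_pos.ne'.isUnit
  have hYdet : IsUnit Y.det := hY.det_pos.ne'.isUnit
  have h1 : (1 + Xᴴ * Y⁻¹ * X) * Xᴴ = Xᴴ * Y⁻¹ * (Y + X * Xᴴ) := by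
    rw [Matrix.add_mul, Matrix.one_mul, Matrix.mul_add, Matrix.nonsing_inv_mul_cancel_right _ _ hYdet,
      Matrix.mul_assoc (Xᴴ * Y⁻¹) X Xᴴ]
  rw [← Matrix.mul_assoc, h1, Matrix.mul_nonsing_inv_cancel_right _ _ hSdet]

/-- The log-det lower-bound inequality (SCA bound): for `X, X̄ ∈ ℂ^{p×q}` and
Hermitian positive definite `Y, Ȳ ∈ ℂ^{p×p}`,
`ln det(I + Xᴴ Y⁻¹ X) ≥ ln det(I + X̄ᴴ Ȳ⁻¹ X̄) − Tr(X̄ᴴ Ȳ⁻¹ X̄) + 2 Re Tr(X̄ᴴ Ȳ⁻¹ X)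
  − Tr((Ȳ + X̄X̄ᴴ)⁻¹ X̄X̄ᴴ Ȳ⁻¹ (Y + XXᴴ))`,
where both determinants are positive reals and the non-`Re` trace terms are real. -/
theorem stmt4 {p q : ℕ} (X Xb : Matrix (Fin p) (Fin q) ℂ)
    (Y Yb : Matrix (Fin p) (Fin p) ℂ) (hY : Y.PosDef) (hYb : Yb.PosDef) :
    Real.log ((1 + Xᴴ * Y⁻¹ * X).det.re)
      ≥ Real.log ((1 + Xbᴴ * Yb⁻¹ * Xb).det.re)
        - ((Xbᴴ * Yb⁻¹ * Xb).trace).re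
        + 2 * ((Xbᴴ * Yb⁻¹ * X).trace).re
        - (((Yb + Xb * Xbᴴ)⁻¹ * (Xb * Xbᴴ) * Yb⁻¹ * (Y + X * Xᴴ)).trace).re ∧
    (0 < (1 + Xᴴ * Y⁻¹ * X).det.re ∧ (1 + Xᴴ * Y⁻¹ * X).det.im = 0) ∧
    (0 < (1 + Xbᴴ * Yb⁻¹ * Xb).det.re ∧ (1 + Xbᴴ * Yb⁻¹ * Xb).det.im = 0) ∧
    ((Xbᴴ * Yb⁻¹ * Xb).trace).im = 0 ∧
    (((Yb + Xb * Xbᴴ)⁻¹ * (Xb * Xbᴴ) * Yb⁻¹ * (Y + X * Xᴴ)).trace).im = 0 := by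
  -- abbreviations
  set S : Matrix (Fin p) (Fin p) ℂ := Y + X * Xᴴ with hSdef
  set Sb : Matrix (Fin p) (Fin p) ℂ := Yb + Xb * Xbᴴ with hSbdef
  set M : Matrix (Fin q) (Fin q) ℂ := 1 + Xᴴ * Y⁻¹ * X with hMdef
  set W : Matrix (Fin q) (Fin q) ℂ := 1 + Xbᴴ * Yb⁻¹ * Xb with hWdef
  -- positivity facts
  have hS : S.PosDef := hY.add_posSemidef (Matrix.posSemidef_self_mul_conjTranspose X)
  have hSb : Sb.PosDef := hYb.add_posSemidef (Matrix.posSemidef_self_mul_conjTranspose Xb)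
  have hMk : (Xᴴ * Y⁻¹ * X).PosSemidef := hY.inv.posSemidef.conjTranspose_mul_mul_same X
  have hWk : (Xbᴴ * Yb⁻¹ * Xb).PosSemidef := hYb.inv.posSemidef.conjTranspose_mul_mul_same Xb
  have hM : M.PosDef := Matrix.PosDef.one.add_posSemidef hMk
  have hW : W.PosDef := Matrix.PosDef.one.add_posSemidef hWk
  have hSdet : IsUnit S.det := hS.det_pos.ne'.isUnit
  have hSbdet : IsUnit Sb.det := hSb.det_pos.ne'.isUnit
  have hSinvH : (S⁻¹)ᴴ = S⁻¹ := hS.1.inv.eq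
  have hSbinvH : (Sb⁻¹)ᴴ = Sb⁻¹ := hSb.1.inv.eq
  -- cancellation helpers
  have c1 : ∀ (B : Matrix (Fin p) (Fin q) ℂ), S * (S⁻¹ * B) = B :=
    fun B => Matrix.mul_nonsing_inv_cancel_left S B hSdet
  have c2 : ∀ (B : Matrix (Fin p) (Fin q) ℂ), S⁻¹ * (S * B) = B :=
    fun B => Matrix.nonsing_inv_mul_cancel_left S B hSdet
  -- key matrix identities
  have hWT : W * (Xbᴴ * Sb⁻¹) = Xbᴴ * Yb⁻¹ := idA Xb hYb
  have hMinv : M⁻¹ = 1 - Xᴴ * (S⁻¹ * X) := by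
    apply Matrix.inv_eq_right_inv
    have h1 : M * (Xᴴ * S⁻¹) = Xᴴ * Y⁻¹ := idA X hY
    have h2 : M * (Xᴴ * (S⁻¹ * X)) = Xᴴ * Y⁻¹ * X := by
      rw [← Matrix.mul_assoc Xᴴ S⁻¹ X, ← Matrix.mul_assoc, h1]
    rw [Matrix.mul_sub, Matrix.mul_one, h2, hMdef, add_sub_cancel_right]
  -- the MSE-type matrix and its PSD gap
  set T : Matrix (Fin q) (Fin p) ℂ := Xbᴴ * Sb⁻¹ with hTdef
  have hTH : Tᴴ = Sb⁻¹ * Xb := by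
    rw [hTdef, Matrix.conjTranspose_mul, hSbinvH, Matrix.conjTranspose_conjTranspose]
  set E : Matrix (Fin q) (Fin q) ℂ := 1 - T * X - Xᴴ * Tᴴ + T * (S * Tᴴ) with hEdef
  set V : Matrix (Fin p) (Fin q) ℂ := Tᴴ - S⁻¹ * X with hVdef
  have hVH : Vᴴ = T - Xᴴ * S⁻¹ := by
    rw [hVdef, Matrix.conjTranspose_sub, Matrix.conjTranspose_conjTranspose,
      Matrix.conjTranspose_mul, hSinvH]
  have hexp : Vᴴ * S * V = T * (S * Tᴴ) - T * X - Xᴴ * Tᴴ + Xᴴ * (S⁻¹ * X) := by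
    rw [hVH, hVdef]
    simp only [Matrix.sub_mul, Matrix.mul_sub, Matrix.mul_assoc, c1, c2]
    abel
  have hEM : E - M⁻¹ = Vᴴ * S * V := by
    rw [hexp, hEdef, hMinv]
    abel
  have hDpsd : (E - M⁻¹).PosSemidef := by
    rw [hEM]; exact hS.posSemidef.conjTranspose_mul_mul_same V
  -- trace inequality chain
  have htr1 : 0 ≤ ((W * (E - M⁻¹)).trace).re := trace_mul_psd_nonneg hW.posSemidef hDpsd
  have htr2 : (W * (E - M⁻¹)).trace = (W * E).trace - (W * M⁻¹).trace := by
    rw [Matrix.mul_sub, Matrix.trace_sub]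
  have htr3 : ((W * M⁻¹).trace).re ≤ ((W * E).trace).re := by
    have := htr1
    rw [htr2] at this
    simp only [Complex.sub_re] at this
    linarith
  have hkey := key_ineq hW hM.inv
  -- det of M⁻¹
  have hMdet0 := det_re_im hM
  have hWdet0 := det_re_im hW
  have hMC : M.det = ((M.det.re : ℝ) : ℂ) := Complex.ext rfl hMdet0.2
  have hMinvdet : (M⁻¹).det.re = (M.det.re)⁻¹ := by
    rw [Matrix.det_nonsing_inv, Ring.inverse_eq_inv']
    conv_lhs => rw [hMC]
    rw [← Complex.ofReal_inv]
    exact Complex.ofReal_re _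
  have hlogMinv : Real.log ((M⁻¹).det.re) = - Real.log (M.det.re) := by
    rw [hMinvdet, Real.log_inv]
  -- compute trace (W * E)
  have hcq : (Fintype.card (Fin q) : ℝ) = (q : ℝ) := by simp
  have htW : W.trace = (q : ℂ) + (Xbᴴ * Yb⁻¹ * Xb).trace := by
    rw [hWdef, Matrix.trace_add, Matrix.trace_one]
    simp
  have htb : (W * (T * X)).trace = (Xbᴴ * Yb⁻¹ * X).trace := by
    rw [← Matrix.mul_assoc, hWT]
  have htc : (W * (Xᴴ * Tᴴ)).trace = star ((Xbᴴ * Yb⁻¹ * X).trace) := by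
    have h0 : (W * (Xᴴ * Tᴴ))ᴴ = T * X * W := by
      rw [hTdef]
      simp [Matrix.conjTranspose_mul, Matrix.mul_assoc, hSbinvH, hW.1.eq]
    calc (W * (Xᴴ * Tᴴ)).trace = star ((W * (Xᴴ * Tᴴ))ᴴ).trace := by
          rw [Matrix.trace_conjTranspose, star_star]
      _ = star ((Xbᴴ * Yb⁻¹ * X).trace) := by
          rw [h0, Matrix.trace_mul_comm, htb]
  have htd : (W * (T * (S * Tᴴ))).trace = (Sb⁻¹ * (Xb * Xbᴴ) * Yb⁻¹ * S).trace := by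
    rw [← Matrix.mul_assoc, hWT, Matrix.trace_mul_comm (Xbᴴ * Yb⁻¹) (S * Tᴴ),
      Matrix.mul_assoc, Matrix.trace_mul_comm (Sb⁻¹ * (Xb * Xbᴴ) * Yb⁻¹) S]
    congr 1
    rw [hTH]
    simp [Matrix.mul_assoc]
  -- expand trace (W * E)
  have hWE : W * E = W - W * (T * X) - W * (Xᴴ * Tᴴ) + W * (T * (S * Tᴴ)) := by
    rw [hEdef, Matrix.mul_add, Matrix.mul_sub, Matrix.mul_sub, Matrix.mul_one]
  have hWEtr : ((W * E).trace).re =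
      (q : ℝ) + ((Xbᴴ * Yb⁻¹ * Xb).trace).re - 2 * ((Xbᴴ * Yb⁻¹ * X).trace).re
        + ((Sb⁻¹ * (Xb * Xbᴴ) * Yb⁻¹ * S).trace).re := by
    rw [hWE, Matrix.trace_add, Matrix.trace_sub, Matrix.trace_sub, htW, htb, htc, htd]
    simp only [Complex.add_re, Complex.sub_re, Complex.conj_re, RCLike.star_def,
      Complex.natCast_re]
    ring
  -- the main inequality
  rw [hlogMinv, Fintype.card_fin] at hkey
  have hmain : Real.log (M.det.re) ≥ Real.log (W.det.re)
      - ((Xbᴴ * Yb⁻¹ * Xb).trace).re + 2 * ((Xbᴴ * Yb⁻¹ * X).trace).re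
      - ((Sb⁻¹ * (Xb * Xbᴴ) * Yb⁻¹ * S).trace).re := by
    have h7 : ((W * E).trace).re = (q : ℝ) + ((Xbᴴ * Yb⁻¹ * Xb).trace).re
        - 2 * ((Xbᴴ * Yb⁻¹ * X).trace).re
        + ((Sb⁻¹ * (Xb * Xbᴴ) * Yb⁻¹ * S).trace).re := hWEtr
    linarith
  -- hermitian-ness of the last trace factor
  have hYbdet : IsUnit Yb.det := hYb.det_pos.ne'.isUnit
  have hKherm : (Xb * Xbᴴ).IsHermitian := Matrix.isHermitian_mul_conjTranspose_self Xb
  have c3 : ∀ (B : Matrix (Fin p) (Fin p) ℂ), B * Yb⁻¹ * Yb = B :=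
    fun B => Matrix.nonsing_inv_mul_cancel_right Yb B hYbdet
  have c4 : ∀ (B : Matrix (Fin p) (Fin p) ℂ), Yb * (Yb⁻¹ * B) = B :=
    fun B => Matrix.mul_nonsing_inv_cancel_left Yb B hYbdet
  have c5 : ∀ (B : Matrix (Fin p) (Fin p) ℂ), Sb⁻¹ * (Sb * B) = B :=
    fun B => Matrix.nonsing_inv_mul_cancel_left Sb B hSbdet
  have hSS : Sb * Sb⁻¹ = 1 := Matrix.mul_nonsing_inv Sb hSbdet
  have h5 : Xb * Xbᴴ * Yb⁻¹ * Sb = Sb * (Yb⁻¹ * (Xb * Xbᴴ)) := by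
    rw [hSbdef]
    rw [Matrix.mul_add, Matrix.add_mul, c3, c4, Matrix.mul_assoc]
  have h6 : Sb⁻¹ * (Xb * Xbᴴ * Yb⁻¹) = Yb⁻¹ * (Xb * Xbᴴ) * Sb⁻¹ := by
    have h8 : Sb⁻¹ * (Xb * Xbᴴ * Yb⁻¹ * Sb) * Sb⁻¹
        = Sb⁻¹ * (Sb * (Yb⁻¹ * (Xb * Xbᴴ))) * Sb⁻¹ := by rw [h5]
    rw [c5, Matrix.mul_assoc Sb⁻¹ (Xb * Xbᴴ * Yb⁻¹ * Sb) Sb⁻¹,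
      Matrix.mul_nonsing_inv_cancel_right _ _ hSbdet] at h8
    exact h8
  have hAherm : (Sb⁻¹ * (Xb * Xbᴴ) * Yb⁻¹).IsHermitian := by
    have h9 : (Sb⁻¹ * (Xb * Xbᴴ) * Yb⁻¹)ᴴ = Yb⁻¹ * (Xb * Xbᴴ) * Sb⁻¹ := by
      simp [Matrix.conjTranspose_mul, hYb.1.inv.eq, hSbinvH, Matrix.mul_assoc]
    rw [Matrix.IsHermitian, h9, ← h6]
    simp [Matrix.mul_assoc]
  have himlast : ((Sb⁻¹ * (Xb * Xbᴴ) * Yb⁻¹ * S).trace).im = 0 :=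
    trace_herm_mul_im hAherm hS.1
  refine ⟨hmain, hMdet0, hWdet0, herm_trace_im hWk.1, himlast⟩
end

section
/- Let H_k ∈ ℂ^{N_k×N_t}, let W_1,…,W_K and W̄_1,…,W̄_K be matrices in ℂ^{N_t×N_k}, let v ∈ ℂ^{N_t}, and let σ_k² > 0. Define the achievable rate R_{L,k}(W_1,…,W_K) = ln det(I + H_k W_k W_kᴴ H_kᴴ (Σ_{u≠k} H_k W_u W_uᴴ H_kᴴ + H_k v vᴴ H_kᴴ + σ_k² I)⁻¹). Define F_k = Σ_{u≠k} H_k W̄_u W̄_uᴴ H_kᴴ + H_k v vᴴ H_kᴴ + σ_k² I and A_k = (F_k + H_k W̄_k W̄_kᴴ H_kᴴ)⁻¹ H_k W̄_k W̄_kᴴ H_kᴴ F_k⁻¹. Then R_{L,k}(W_1,…,W_K) ≥ ln det(I + W̄_kᴴ H_kᴴ F_k⁻¹ H_k W̄_k) − Tr(W̄_kᴴ H_kᴴ F_k⁻¹ H_k W̄_k) + 2 Re(Tr(W̄_kᴴ H_kᴴ F_k⁻¹ H_k W_k)) − Tr(Σ_{u=1}^K W_uᴴ H_kᴴ A_k H_k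 W_u) − Tr(A_k (H_k v vᴴ H_kᴴ + σ_k² I)). -/
open Matrix ComplexOrder

section AuxSCA
variable {n : Type*} [Fintype n] [DecidableEq n]

omit [DecidableEq n] in
open scoped MatrixOrder in
private lemma trace_psd_mul_re_nonneg' {P Q : Matrix n n ℂ} (hP : P.PosSemidef) (hQ : Q.PosSemidef) :
    0 ≤ ((P * Q).trace).re := by
  classical
  obtain ⟨B, hB⟩ := CStarAlgebra.nonneg_iff_eq_star_mul_self.mp hP.nonneg
  rw [star_eq_conjTranspose] at hB; subst hB
  obtain ⟨C, hC⟩ := CStarAlgebra.nonneg_iff_eq_star_mul_self.mp hQ.nonneg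
  rw [star_eq_conjTranspose] at hC; subst hC
  have h1 : (Bᴴ * B * (Cᴴ * C)).trace = ((B * Cᴴ) * (B * Cᴴ)ᴴ).trace := by
    rw [conjTranspose_mul, conjTranspose_conjTranspose,
      show Bᴴ * B * (Cᴴ * C) = Bᴴ * (B * Cᴴ * C) by noncomm_ring, trace_mul_comm]
    congr 1
    noncomm_ring
  rw [h1]
  have : (((B * Cᴴ) * (B * Cᴴ)ᴴ).trace).re
      = ∑ i, ∑ j, Complex.normSq ((B * Cᴴ) i j) := by
    simp only [Matrix.trace, Matrix.diag, Matrix.mul_apply, Matrix.conjTranspose_apply]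
    rw [Complex.re_sum]
    refine Finset.sum_congr rfl fun i _ => ?_
    rw [Complex.re_sum]
    refine Finset.sum_congr rfl fun j _ => ?_
    rw [Complex.star_def, Complex.mul_conj, Complex.ofReal_re]
  rw [this]
  exact Finset.sum_nonneg fun i _ => Finset.sum_nonneg fun j _ => Complex.normSq_nonneg _

private lemma posdef_det_re_pos' {M : Matrix n n ℂ} (hM : M.PosDef) : 0 < M.det.re :=
  (Complex.pos_iff.mp hM.det_pos).1

private lemma posdef_det_eq_re' {M : Matrix n n ℂ} (hM : M.PosDef) : M.det = (M.det.re : ℂ) :=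
  Complex.ext rfl (by simp [((Complex.pos_iff.mp hM.det_pos).2).symm])

private lemma posdef_inv_det_re' {M : Matrix n n ℂ} (hM : M.PosDef) :
    M⁻¹.det.re = (M.det.re)⁻¹ := by
  rw [det_nonsing_inv, posdef_det_eq_re' hM]
  simp [Ring.inverse_eq_inv']

private lemma posdef_conj' {Q S : Matrix n n ℂ} (hQ : Q.PosDef) (hS : S.IsHermitian)
    (hSu : IsUnit S) : (S * Q * S).PosDef := by
  have h := hQ.conjTranspose_mul_mul_same (B := S) (mulVec_injective_iff_isUnit.mpr hSu)
  rwa [hS.eq] at h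

private lemma logdet_le_trace' {M : Matrix n n ℂ} (hM : M.PosDef) :
    Real.log (M.det.re) ≤ M.trace.re - Fintype.card n := by
  have hdet : M.det.re = ∏ i, hM.isHermitian.eigenvalues i := by
    have h := hM.isHermitian.det_eq_prod_eigenvalues
    rw [h]
    norm_cast
  have htr : M.trace.re = ∑ i, hM.isHermitian.eigenvalues i := by
    have h : M.trace = ((∑ i, hM.isHermitian.eigenvalues i : ℝ) : ℂ) := by
      rw [hM.isHermitian.trace_eq_sum_eigenvalues]
      push_cast
      rfl
    rw [h, Complex.ofReal_re]
  rw [hdet, htr]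
  have hpos : ∀ i, (0:ℝ) < hM.isHermitian.eigenvalues i := hM.eigenvalues_pos
  rw [Real.log_prod (fun i _ => (hpos i).ne')]
  calc ∑ i, Real.log (hM.isHermitian.eigenvalues i)
      ≤ ∑ i, (hM.isHermitian.eigenvalues i - 1) :=
        Finset.sum_le_sum fun i _ => Real.log_le_sub_one_of_pos (hpos i)
    _ = (∑ i, hM.isHermitian.eigenvalues i) - Fintype.card n := by
        rw [Finset.sum_sub_distrib]; simp

open scoped MatrixOrder in
private lemma logdet_sub_le' {P Q : Matrix n n ℂ} (hP : P.PosDef) (hQ : Q.PosDef) :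
    Real.log Q.det.re ≤ Real.log P.det.re + ((P⁻¹ * Q).trace).re - Fintype.card n := by
  have hPi : P⁻¹.PosDef := hP.inv
  set s := CFC.sqrt P⁻¹ with hs
  have hss : s * s = P⁻¹ := CFC.sqrt_mul_sqrt_self _ hPi.posSemidef.nonneg
  have hsH : s.IsHermitian := (CFC.sqrt_nonneg _).posSemidef.isHermitian
  have hsdet : IsUnit s.det := by
    have h1 : s.det * s.det = P⁻¹.det := by rw [← det_mul, hss]
    have h2 : P⁻¹.det ≠ 0 := hPi.det_pos.ne'
    have : s.det ≠ 0 := fun h => h2 (by rw [← h1, h]; ring)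
    exact this.isUnit
  have hsu : IsUnit s := (isUnit_iff_isUnit_det _).mpr hsdet
  have hM : (s * Q * s).PosDef := posdef_conj' hQ hsH hsu
  have h2 := logdet_le_trace' hM
  have htr : (s * Q * s).trace = (P⁻¹ * Q).trace := by
    rw [trace_mul_cycle, hss]
  have hdet : (s * Q * s).det.re = (P.det.re)⁻¹ * Q.det.re := by
    have h3 : (s * Q * s).det = P⁻¹.det * Q.det := by
      rw [det_mul, det_mul, mul_comm s.det Q.det, mul_assoc, ← det_mul, hss]
      ring
    have h4 : P⁻¹.det = ((P.det.re)⁻¹ : ℝ) := by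
      rw [det_nonsing_inv, posdef_det_eq_re' hP]
      push_cast
      simp [Ring.inverse_eq_inv']
    rw [h3, h4, posdef_det_eq_re' hQ]
    push_cast
    simp
  rw [hdet, htr] at h2
  rw [Real.log_mul (inv_ne_zero (posdef_det_re_pos' hP).ne') (posdef_det_re_pos' hQ).ne',
    Real.log_inv] at h2
  linarith

end AuxSCA


set_option maxHeartbeats 1600000 in
/-- The SCA concave lower bound on the achievable rate of user `k` under
linear precoding: with
`R_{L,k} = ln det(I + H W_k W_kᴴ Hᴴ (Σ_{u≠k} H W_u W_uᴴ Hᴴ + H v vᴴ Hᴴ + σ² I)⁻¹)`,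
`F = Σ_{u≠k} H W̄_u W̄_uᴴ Hᴴ + H v vᴴ Hᴴ + σ² I`, and
`A = (F + H W̄_k W̄_kᴴ Hᴴ)⁻¹ H W̄_k W̄_kᴴ Hᴴ F⁻¹`, we have
`R_{L,k} ≥ ln det(I + W̄_kᴴ Hᴴ F⁻¹ H W̄_k) − Tr(W̄_kᴴ Hᴴ F⁻¹ H W̄_k)
  + 2 Re Tr(W̄_kᴴ Hᴴ F⁻¹ H W_k) − Tr(Σ_u W_uᴴ Hᴴ A H W_u) − Tr(A (H v vᴴ Hᴴ + σ² I))`. -/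
theorem stmt6 {Nt Nk K : ℕ} (k : Fin K)
    (H : Matrix (Fin Nk) (Fin Nt) ℂ)
    (W Wb : Fin K → Matrix (Fin Nt) (Fin Nk) ℂ)
    (v : Fin Nt → ℂ) (σ2 : ℝ) (hσ : 0 < σ2)
    (F A : Matrix (Fin Nk) (Fin Nk) ℂ)
    (hF : F = ∑ u ∈ Finset.univ.erase k, H * Wb u * (Wb u)ᴴ * Hᴴ
            + H * vecMulVec v (star v) * Hᴴ + (σ2 : ℂ) • 1)
    (hA : A = (F + H * Wb k * (Wb k)ᴴ * Hᴴ)⁻¹ * (H * Wb k * (Wb k)ᴴ * Hᴴ) * F⁻¹) :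
    Real.log ((1 + H * W k * (W k)ᴴ * Hᴴ *
        (∑ u ∈ Finset.univ.erase k, H * W u * (W u)ᴴ * Hᴴ
          + H * vecMulVec v (star v) * Hᴴ + (σ2 : ℂ) • 1)⁻¹).det.re)
      ≥ Real.log ((1 + (Wb k)ᴴ * Hᴴ * F⁻¹ * H * Wb k).det.re)
        - (((Wb k)ᴴ * Hᴴ * F⁻¹ * H * Wb k).trace).re
        + 2 * (((Wb k)ᴴ * Hᴴ * F⁻¹ * H * W k).trace).re
        - ((∑ u, (W u)ᴴ * Hᴴ * A * H * W u).trace).re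
        - ((A * (H * vecMulVec v (star v) * Hᴴ + (σ2 : ℂ) • 1)).trace).re := by
  classical
  -- named matrices
  obtain ⟨Yk, hYk⟩ : ∃ M, M = H * W k := ⟨_, rfl⟩
  obtain ⟨Yb, hYb⟩ : ∃ M, M = H * Wb k := ⟨_, rfl⟩
  obtain ⟨V, hVdef⟩ : ∃ M, M = H * vecMulVec v (star v) * Hᴴ := ⟨_, rfl⟩
  obtain ⟨σ1, hσ1⟩ : ∃ M : Matrix (Fin Nk) (Fin Nk) ℂ, M = (σ2 : ℂ) • 1 := ⟨_, rfl⟩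
  obtain ⟨G, hG⟩ : ∃ M, M = ∑ u ∈ Finset.univ.erase k, H * W u * (W u)ᴴ * Hᴴ + V + σ1 :=
    ⟨_, rfl⟩
  obtain ⟨T, hT⟩ : ∃ M, M = G + Yk * Ykᴴ := ⟨_, rfl⟩
  obtain ⟨Tb, hTb⟩ : ∃ M, M = F + Yb * Ybᴴ := ⟨_, rfl⟩
  obtain ⟨Dw, hDw⟩ : ∃ M, M = 1 + Ykᴴ * G⁻¹ * Yk := ⟨_, rfl⟩
  obtain ⟨Em, hEm⟩ : ∃ M, M = 1 - Ykᴴ * T⁻¹ * Yk := ⟨_, rfl⟩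
  obtain ⟨Db, hDb⟩ : ∃ M, M = 1 + Ybᴴ * F⁻¹ * Yb := ⟨_, rfl⟩
  obtain ⟨Eb, hEb⟩ : ∃ M, M = 1 - Ybᴴ * Tb⁻¹ * Yb := ⟨_, rfl⟩
  obtain ⟨Ub, hUb⟩ : ∃ M, M = Tb⁻¹ * Yb := ⟨_, rfl⟩
  obtain ⟨Ee, hEe⟩ : ∃ M, M = 1 - Ubᴴ * Yk - Ykᴴ * Ub + Ubᴴ * T * Ub := ⟨_, rfl⟩
  obtain ⟨Cc, hCc⟩ : ∃ M, M = Ub - T⁻¹ * Yk := ⟨_, rfl⟩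
  -- basic PSD facts
  have hP : ∀ (Wu : Matrix (Fin Nt) (Fin Nk) ℂ), (H * Wu * Wuᴴ * Hᴴ).PosSemidef := by
    intro Wu
    have h : H * Wu * Wuᴴ * Hᴴ = (H * Wu) * (H * Wu)ᴴ := by
      rw [conjTranspose_mul]; simp only [Matrix.mul_assoc]
    rw [h]; exact posSemidef_self_mul_conjTranspose _
  have hVpsd : V.PosSemidef := by
    have h : V = (H * replicateCol Unit v) * (H * replicateCol Unit v)ᴴ := by
      rw [hVdef, vecMulVec_eq Unit v (star v), ← conjTranspose_replicateCol, conjTranspose_mul]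
      simp only [Matrix.mul_assoc]
    rw [h]; exact posSemidef_self_mul_conjTranspose _
  have hσpd : σ1.PosDef := by
    rw [hσ1, smul_one_eq_diagonal]
    exact .diagonal fun i => Complex.zero_lt_real.mpr hσ
  have hsumW : (∑ u ∈ Finset.univ.erase k, H * W u * (W u)ᴴ * Hᴴ).PosSemidef :=
    Finset.sum_induction _ _ (fun a b ha hb => ha.add hb) .zero (fun u _ => hP (W u))
  have hsumWb : (∑ u ∈ Finset.univ.erase k, H * Wb u * (Wb u)ᴴ * Hᴴ).PosSemidef :=
    Finset.sum_induction _ _ (fun a b ha hb => ha.add hb) .zero (fun u _ => hP (Wb u))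
  have hGpd : G.PosDef := by
    rw [hG]; exact Matrix.PosDef.posSemidef_add (hsumW.add hVpsd) hσpd
  have hFpd : F.PosDef := by
    rw [hF]
    exact Matrix.PosDef.posSemidef_add (hsumWb.add (hVdef ▸ hVpsd)) (hσ1 ▸ hσpd)
  have hYkYk : (Yk * Ykᴴ).PosSemidef := posSemidef_self_mul_conjTranspose _
  have hYbYb : (Yb * Ybᴴ).PosSemidef := posSemidef_self_mul_conjTranspose _
  have hTpd : T.PosDef := by rw [hT]; exact hGpd.add_posSemidef hYkYk
  have hTbpd : Tb.PosDef := by rw [hTb]; exact hFpd.add_posSemidef hYbYb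
  -- inverse identities
  have hGi1 : G * G⁻¹ = 1 := mul_nonsing_inv _ hGpd.det_pos.ne'.isUnit
  have hGi2 : G⁻¹ * G = 1 := nonsing_inv_mul _ hGpd.det_pos.ne'.isUnit
  have hTi1 : T * T⁻¹ = 1 := mul_nonsing_inv _ hTpd.det_pos.ne'.isUnit
  have hTi2 : T⁻¹ * T = 1 := nonsing_inv_mul _ hTpd.det_pos.ne'.isUnit
  have hFi1 : F * F⁻¹ = 1 := mul_nonsing_inv _ hFpd.det_pos.ne'.isUnit
  have hFi2 : F⁻¹ * F = 1 := nonsing_inv_mul _ hFpd.det_pos.ne'.isUnit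
  have hTbi1 : Tb * Tb⁻¹ = 1 := mul_nonsing_inv _ hTbpd.det_pos.ne'.isUnit
  have hTbi2 : Tb⁻¹ * Tb = 1 := nonsing_inv_mul _ hTbpd.det_pos.ne'.isUnit
  have hTinvH : (T⁻¹)ᴴ = T⁻¹ := hTpd.inv.isHermitian.eq
  have hTbinvH : (Tb⁻¹)ᴴ = Tb⁻¹ := hTbpd.inv.isHermitian.eq
  have hFinvH : (F⁻¹)ᴴ = F⁻¹ := hFpd.inv.isHermitian.eq
  -- key algebraic identities
  have key0 : T⁻¹ * (Yk * Ykᴴ) * G⁻¹ = G⁻¹ - T⁻¹ := by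
    have h1 : Yk * Ykᴴ = T - G := by rw [hT, add_sub_cancel_left]
    calc T⁻¹ * (Yk * Ykᴴ) * G⁻¹ = T⁻¹ * (T - G) * G⁻¹ := by rw [h1]
      _ = (1 - T⁻¹ * G) * G⁻¹ := by rw [Matrix.mul_sub, hTi2]
      _ = G⁻¹ - T⁻¹ * (G * G⁻¹) := by rw [Matrix.sub_mul, Matrix.one_mul, Matrix.mul_assoc]
      _ = G⁻¹ - T⁻¹ := by rw [hGi1, Matrix.mul_one]
  have keyb : Tb⁻¹ * (Yb * Ybᴴ) * F⁻¹ = F⁻¹ - Tb⁻¹ := by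
    have h1 : Yb * Ybᴴ = Tb - F := by rw [hTb, add_sub_cancel_left]
    calc Tb⁻¹ * (Yb * Ybᴴ) * F⁻¹ = Tb⁻¹ * (Tb - F) * F⁻¹ := by rw [h1]
      _ = (1 - Tb⁻¹ * F) * F⁻¹ := by rw [Matrix.mul_sub, hTbi2]
      _ = F⁻¹ - Tb⁻¹ * (F * F⁻¹) := by rw [Matrix.sub_mul, Matrix.one_mul, Matrix.mul_assoc]
      _ = F⁻¹ - Tb⁻¹ := by rw [hFi1, Matrix.mul_one]
  have keyb' : F⁻¹ * (Yb * Ybᴴ) * Tb⁻¹ = F⁻¹ - Tb⁻¹ := by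
    have h1 : Yb * Ybᴴ = Tb - F := by rw [hTb, add_sub_cancel_left]
    calc F⁻¹ * (Yb * Ybᴴ) * Tb⁻¹ = F⁻¹ * (Tb - F) * Tb⁻¹ := by rw [h1]
      _ = (F⁻¹ * Tb - 1) * Tb⁻¹ := by rw [Matrix.mul_sub, hFi2]
      _ = F⁻¹ * (Tb * Tb⁻¹) - Tb⁻¹ := by rw [Matrix.sub_mul, Matrix.one_mul, Matrix.mul_assoc]
      _ = F⁻¹ - Tb⁻¹ := by rw [hTbi1, Matrix.mul_one]
  have hED : Em * Dw = 1 := by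
    have e1 : Em * Dw = 1 + Ykᴴ * G⁻¹ * Yk - Ykᴴ * T⁻¹ * Yk
        - Ykᴴ * (T⁻¹ * (Yk * Ykᴴ) * G⁻¹) * Yk := by
      rw [hEm, hDw]; noncomm_ring
    rw [e1, key0]
    noncomm_ring
  have hEbDb : Eb * Db = 1 := by
    have e1 : Eb * Db = 1 + Ybᴴ * F⁻¹ * Yb - Ybᴴ * Tb⁻¹ * Yb
        - Ybᴴ * (Tb⁻¹ * (Yb * Ybᴴ) * F⁻¹) * Yb := by
      rw [hEb, hDb]; noncomm_ring
    rw [e1, keyb]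
    noncomm_ring
  have hDbEb : Db * Eb = 1 := by
    have e1 : Db * Eb = 1 + Ybᴴ * F⁻¹ * Yb - Ybᴴ * Tb⁻¹ * Yb
        - Ybᴴ * (F⁻¹ * (Yb * Ybᴴ) * Tb⁻¹) * Yb := by
      rw [hEb, hDb]; noncomm_ring
    rw [e1, keyb']
    noncomm_ring
  -- PD of Dw, Db and hence Em, Eb
  have hDwpd : Dw.PosDef := by
    rw [hDw]; exact Matrix.PosDef.one.add_posSemidef (hGpd.inv.posSemidef.conjTranspose_mul_mul_same Yk)
  have hDbpd : Db.PosDef := by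
    rw [hDb]; exact Matrix.PosDef.one.add_posSemidef (hFpd.inv.posSemidef.conjTranspose_mul_mul_same Yb)
  have hEmEq : Dw⁻¹ = Em := inv_eq_left_inv hED
  have hEbEq : Db⁻¹ = Eb := inv_eq_left_inv hEbDb
  have hEbinv : Eb⁻¹ = Db := inv_eq_left_inv hDbEb
  have hEmpd : Em.PosDef := hEmEq ▸ hDwpd.inv
  have hEbpd : Eb.PosDef := hEbEq ▸ hDbpd.inv
  -- identities involving Ub, Db
  have hUbH : Ubᴴ = Ybᴴ * Tb⁻¹ := by rw [hUb, conjTranspose_mul, hTbinvH]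
  have hDbU : Db * (Ybᴴ * Tb⁻¹) = Ybᴴ * F⁻¹ := by
    have hx : Ybᴴ * F⁻¹ * F = Ybᴴ := by rw [Matrix.mul_assoc, hFi2, Matrix.mul_one]
    have h1 : Db * Ybᴴ = Ybᴴ * F⁻¹ * Tb := by
      calc Db * Ybᴴ = Ybᴴ * F⁻¹ * F + Ybᴴ * F⁻¹ * (Yb * Ybᴴ) := by rw [hx, hDb]; noncomm_ring
        _ = Ybᴴ * F⁻¹ * (F + Yb * Ybᴴ) := by noncomm_ring
        _ = Ybᴴ * F⁻¹ * Tb := by rw [← hTb]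
    calc Db * (Ybᴴ * Tb⁻¹) = (Db * Ybᴴ) * Tb⁻¹ := by rw [Matrix.mul_assoc]
      _ = Ybᴴ * F⁻¹ * (Tb * Tb⁻¹) := by rw [h1, Matrix.mul_assoc]
      _ = Ybᴴ * F⁻¹ := by rw [hTbi1, Matrix.mul_one]
  have hDbH : Dbᴴ = Db := by
    rw [hDb, conjTranspose_add, conjTranspose_one, conjTranspose_mul, conjTranspose_mul,
      hFinvH, conjTranspose_conjTranspose, Matrix.mul_assoc]
  have hUbDb : Ub * Db = F⁻¹ * Yb := by
    have h := congrArg conjTranspose hDbU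
    simp only [conjTranspose_mul, conjTranspose_conjTranspose, hTbinvH, hFinvH, hDbH] at h
    rw [hUb]
    exact h
  have hAUb : A = Ub * Db * Ubᴴ := by
    have hBk : H * Wb k * (Wb k)ᴴ * Hᴴ = Yb * Ybᴴ := by
      rw [hYb, conjTranspose_mul]; simp only [Matrix.mul_assoc]
    rw [hA, hBk, ← hTb, hUbH, hUb]
    calc Tb⁻¹ * (Yb * Ybᴴ) * F⁻¹ = Tb⁻¹ * Yb * (Ybᴴ * F⁻¹) := by noncomm_ring
      _ = Tb⁻¹ * Yb * (Db * (Ybᴴ * Tb⁻¹)) := by rw [hDbU]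
      _ = Tb⁻¹ * Yb * Db * (Ybᴴ * Tb⁻¹) := by noncomm_ring
  -- the error-matrix identity
  have hCH : Ccᴴ = Ubᴴ - Ykᴴ * T⁻¹ := by
    rw [hCc, conjTranspose_sub, conjTranspose_mul, hTinvH]
  have hCeq : Ccᴴ * T * Cc = Ee - Em := by
    have hTTi : T * (T⁻¹ * Yk) = Yk := by rw [← Matrix.mul_assoc, hTi1, Matrix.one_mul]
    have hTiT : Ykᴴ * T⁻¹ * T = Ykᴴ := by rw [Matrix.mul_assoc, hTi2, Matrix.mul_one]
    calc Ccᴴ * T * Cc = (Ubᴴ - Ykᴴ * T⁻¹) * T * (Ub - T⁻¹ * Yk) := by rw [hCH, hCc]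
      _ = Ubᴴ * T * Ub - Ubᴴ * (T * (T⁻¹ * Yk)) - (Ykᴴ * T⁻¹ * T) * Ub
          + (Ykᴴ * T⁻¹ * T) * (T⁻¹ * Yk) := by noncomm_ring
      _ = Ubᴴ * T * Ub - Ubᴴ * Yk - Ykᴴ * Ub + Ykᴴ * (T⁻¹ * Yk) := by rw [hTTi, hTiT]
      _ = Ee - Em := by rw [hEe, hEm]; noncomm_ring
  have hdiffpsd : (Ee - Em).PosSemidef := by
    rw [← hCeq]; exact hTpd.posSemidef.conjTranspose_mul_mul_same Cc
  -- the main inequality chain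
  have step := logdet_sub_le' hEbpd hEmpd
  rw [hEbinv] at step
  have hdetEm : Em.det.re = (Dw.det.re)⁻¹ := by rw [← hEmEq, posdef_inv_det_re' hDwpd]
  have hdetEb : Eb.det.re = (Db.det.re)⁻¹ := by rw [← hEbEq, posdef_inv_det_re' hDbpd]
  rw [hdetEm, hdetEb, Real.log_inv, Real.log_inv, Fintype.card_fin] at step
  have mono : (Db * Em).trace.re ≤ (Db * Ee).trace.re := by
    have h0 : 0 ≤ ((Db * (Ee - Em)).trace).re :=
      trace_psd_mul_re_nonneg' hDbpd.posSemidef hdiffpsd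
    have h1 : (Db * (Ee - Em)).trace = (Db * Ee).trace - (Db * Em).trace := by
      rw [Matrix.mul_sub, trace_sub]
    rw [h1, Complex.sub_re] at h0
    linarith
  -- trace expansions
  have texp : (Db * Ee).trace = Db.trace - (Db * (Ubᴴ * Yk)).trace - (Db * (Ykᴴ * Ub)).trace
      + (Db * (Ubᴴ * T * Ub)).trace := by
    rw [hEe, show Db * (1 - Ubᴴ * Yk - Ykᴴ * Ub + Ubᴴ * T * Ub)
        = Db - Db * (Ubᴴ * Yk) - Db * (Ykᴴ * Ub) + Db * (Ubᴴ * T * Ub) by noncomm_ring]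
    rw [trace_add, trace_sub, trace_sub]
  have p1 : Db.trace = (Nk : ℂ) + (Ybᴴ * F⁻¹ * Yb).trace := by
    rw [hDb, trace_add, trace_one]
    simp
  have p2 : (Db * (Ubᴴ * Yk)).trace = (Ybᴴ * F⁻¹ * Yk).trace := by
    rw [hUbH, show Db * (Ybᴴ * Tb⁻¹ * Yk) = (Db * (Ybᴴ * Tb⁻¹)) * Yk by noncomm_ring, hDbU]
  have p3 : (Db * (Ykᴴ * Ub)).trace = star ((Ybᴴ * F⁻¹ * Yk).trace) := by
    have h2 : (Ybᴴ * F⁻¹ * Yk)ᴴ = Ykᴴ * (F⁻¹ * Yb) := by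
      simp only [conjTranspose_mul, conjTranspose_conjTranspose, hFinvH, Matrix.mul_assoc]
    calc (Db * (Ykᴴ * Ub)).trace = ((Ykᴴ * Ub) * Db).trace := trace_mul_comm _ _
      _ = (Ykᴴ * (Ub * Db)).trace := by rw [Matrix.mul_assoc]
      _ = (Ykᴴ * (F⁻¹ * Yb)).trace := by rw [hUbDb]
      _ = ((Ybᴴ * F⁻¹ * Yk)ᴴ).trace := by rw [h2]
      _ = star ((Ybᴴ * F⁻¹ * Yk).trace) := trace_conjTranspose _
  have p4 : (Db * (Ubᴴ * T * Ub)).trace = (A * T).trace := by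
    calc (Db * (Ubᴴ * T * Ub)).trace = ((Ubᴴ * T * Ub) * Db).trace := trace_mul_comm _ _
      _ = ((Ubᴴ * T) * (Ub * Db)).trace := by rw [Matrix.mul_assoc, Matrix.mul_assoc]
      _ = ((Ub * Db) * (Ubᴴ * T)).trace := trace_mul_comm _ _
      _ = (A * T).trace := by rw [hAUb]; congr 1; noncomm_ring
  have hTsum : T = (∑ u, H * W u * (W u)ᴴ * Hᴴ) + (V + σ1) := by
    have hk : H * W k * (W k)ᴴ * Hᴴ = Yk * Ykᴴ := by
      rw [hYk, conjTranspose_mul]; simp only [Matrix.mul_assoc]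
    rw [hT, hG, ← hk, ← Finset.sum_erase_add Finset.univ _ (Finset.mem_univ k)]
    abel
  have p5 : (A * T).trace = (∑ u, (H * W u)ᴴ * A * (H * W u)).trace + (A * (V + σ1)).trace := by
    rw [hTsum, Matrix.mul_add, trace_add, Finset.mul_sum, trace_sum, trace_sum]
    congr 1
    refine Finset.sum_congr rfl fun u _ => ?_
    have hu : A * (H * W u * (W u)ᴴ * Hᴴ) = (A * (H * W u)) * (H * W u)ᴴ := by
      rw [conjTranspose_mul]; simp only [Matrix.mul_assoc]
    rw [hu, trace_mul_comm, ← Matrix.mul_assoc]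
  -- rewrite the goal
  have gG : (∑ u ∈ Finset.univ.erase k, H * W u * (W u)ᴴ * Hᴴ
      + H * vecMulVec v (star v) * Hᴴ + (σ2 : ℂ) • 1) = G := by rw [hG, hVdef, hσ1]
  have gL : (1 + H * W k * (W k)ᴴ * Hᴴ * G⁻¹).det = Dw.det := by
    have h1 : H * W k * (W k)ᴴ * Hᴴ * G⁻¹ = Yk * (Ykᴴ * G⁻¹) := by
      rw [hYk, conjTranspose_mul]; simp only [Matrix.mul_assoc]
    rw [h1, det_one_add_mul_comm, ← hDw]
  have gR1 : (1 : Matrix (Fin Nk) (Fin Nk) ℂ) + (Wb k)ᴴ * Hᴴ * F⁻¹ * H * Wb k = Db := by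
    rw [hDb, hYb, conjTranspose_mul]; simp only [Matrix.mul_assoc]
  have gR1b : (Wb k)ᴴ * Hᴴ * F⁻¹ * H * Wb k = Ybᴴ * F⁻¹ * Yb := by
    rw [hYb, conjTranspose_mul]; simp only [Matrix.mul_assoc]
  have gR2 : (Wb k)ᴴ * Hᴴ * F⁻¹ * H * W k = Ybᴴ * F⁻¹ * Yk := by
    rw [hYb, hYk, conjTranspose_mul]; simp only [Matrix.mul_assoc]
  have gR3 : (∑ u, (W u)ᴴ * Hᴴ * A * H * W u) = ∑ u, (H * W u)ᴴ * A * (H * W u) :=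
    Finset.sum_congr rfl fun u _ => by
      rw [conjTranspose_mul]; simp only [Matrix.mul_assoc]
  have gR4 : H * vecMulVec v (star v) * Hᴴ + (σ2 : ℂ) • 1 = V + σ1 := by rw [hVdef, hσ1]
  rw [gG, gL, gR1, gR1b, gR2, gR3, gR4]
  -- final real arithmetic
  have texp_re := congrArg Complex.re texp
  have p1_re := congrArg Complex.re p1
  have p2_re := congrArg Complex.re p2
  have p3_re := congrArg Complex.re p3
  have p45_re := congrArg Complex.re (p4.trans p5)
  simp only [Complex.add_re, Complex.sub_re] at texp_re p1_re p45_re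
  rw [Complex.natCast_re] at p1_re
  rw [show (star ((Ybᴴ * F⁻¹ * Yk).trace)).re = ((Ybᴴ * F⁻¹ * Yk).trace).re from
    Complex.conj_re _] at p3_re
  linarith
end

section
/- Fix transmit antenna positions t_1,…,t_{N_t} ∈ ℝ³, a target position s ∈ ℝ³, reals ρ_s and λ with λ ≠ 0, a fixed vector f_r ∈ ℂ^{N_r}, vectors u ∈ ℂ^{N_r}, v ∈ ℂ^{N_t}, matrices W_1,…,W_K ∈ ℂ^{N_t×N_k}, and reals γ₀, σ_z². For a real variable x replacing the x-coordinate of t_m (for a fixed index m, with the other coordinates of t_m and all other positions fixed), define f_t(x) ∈ ℂ^{N_t} with j-th entry exp(i(2π/λ)‖t_j(x) − s‖) (only entry m depends on x), G(x) = ρ_s f_r f_t(x)ᴴ, M = γ₀ Σ_{u'=1}^K W_{u'} W_{u'}ᴴ − v vᴴ, and κ(x) = uᴴ G(x) M G(x)ᴴ u + γ₀ σ_z² uᴴ u (a real number since M is Hermitian). Let e(x) = (f_rᴴ u) · uᴴ G(x) M ∈ ℂ^{1×N_t}. If t_m(x₀) ≠ s, then κ is differentiable at x₀ with derivative κ'(x₀)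 = −(4πρ_s/λ) · Im( e(x₀)(m) · exp(i(2π/λ)‖t_m(x₀) − s‖) · (x₀ − s₁)/‖t_m(x₀) − s‖ ), where s₁ is the x-coordinate of s. -/
open Matrix

private lemma vecMulVec_mulVec' {p n : ℕ} (a : Fin p → ℂ) (b x : Fin n → ℂ) :
    (vecMulVec a b) *ᵥ x = (b ⬝ᵥ x) • a := by
  ext i
  simp only [Matrix.mulVec, dotProduct, Matrix.vecMulVec_apply, Pi.smul_apply,
    smul_eq_mul, Finset.sum_mul]
  exact Finset.sum_congr rfl fun j _ => by ring

private lemma vecMul_vecMulVec' {p n : ℕ} (y a : Fin p → ℂ) (b : Fin n → ℂ) :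
    y ᵥ* (vecMulVec a b) = (y ⬝ᵥ a) • b := by
  ext j
  simp only [Matrix.vecMul, dotProduct, Matrix.vecMulVec_apply, Pi.smul_apply,
    smul_eq_mul, Finset.sum_mul]
  exact Finset.sum_congr rfl fun i _ => by ring

private lemma conjT_vecMulVec' {p n : ℕ} (a : Fin p → ℂ) (b : Fin n → ℂ) :
    (vecMulVec a (star b))ᴴ = vecMulVec b (star a) := by
  ext i j
  simp [Matrix.conjTranspose_apply, Matrix.vecMulVec_apply, mul_comm]

private lemma vecMul_smulMatrix' {p n : ℕ} (x : Fin p → ℂ) (c : ℂ)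
    (A : Matrix (Fin p) (Fin n) ℂ) : x ᵥ* (c • A) = c • (x ᵥ* A) := by
  ext j
  simp only [Matrix.vecMul, dotProduct, Matrix.smul_apply, Pi.smul_apply,
    smul_eq_mul, Finset.mul_sum]
  exact Finset.sum_congr rfl fun i _ => by ring

/-- Gradient of the reformulated sensing-SINR constraint function
`κ(x) = uᴴ G(x) M G(x)ᴴ u + γ₀σ_z² uᴴu` (with `G(x) = ρ_s f_r f_t(x)ᴴ`,
`f_t(x)_j = exp(i(2π/λ)‖t_j(x) − s‖)`, `M = γ₀ Σ_{u'} W_{u'}W_{u'}ᴴ − vvᴴ`,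
`e(x) = (f_rᴴu) uᴴ G(x) M`) with respect to the x-coordinate of the `m`-th BS
transmit movable antenna: if `t_m(x₀) ≠ s` then
`κ'(x₀) = −(4πρ_s/λ) Im( e(x₀)(m) exp(i(2π/λ)‖t_m(x₀)−s‖) (x₀−s₁)/‖t_m(x₀)−s‖ )`. -/
theorem stmt14 {Nt Nr Nk K : ℕ} (m : Fin Nt)
    (t : ℝ → Fin Nt → EuclideanSpace ℝ (Fin 3))
    (s : EuclideanSpace ℝ (Fin 3)) (x₀ : ℝ)
    (htm0 : ∀ x, t x m 0 = x)
    (htm1 : ∀ x, t x m 1 = t x₀ m 1)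
    (htm2 : ∀ x, t x m 2 = t x₀ m 2)
    (htother : ∀ x, ∀ j : Fin Nt, j ≠ m → t x j = t x₀ j)
    (ρs lam : ℝ) (hlam : lam ≠ 0)
    (fr : Fin Nr → ℂ) (u : Fin Nr → ℂ) (v : Fin Nt → ℂ)
    (W : Fin K → Matrix (Fin Nt) (Fin Nk) ℂ)
    (γ0 σz2 : ℝ)
    (ft : ℝ → Fin Nt → ℂ)
    (hft : ∀ x (j : Fin Nt), ft x j
      = Complex.exp (Complex.I * ((2 * Real.pi / lam : ℝ) : ℂ) * ((‖t x j - s‖ : ℝ) : ℂ)))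
    (G : ℝ → Matrix (Fin Nr) (Fin Nt) ℂ)
    (hG : ∀ x, G x = (ρs : ℂ) • vecMulVec fr (star (ft x)))
    (M : Matrix (Fin Nt) (Fin Nt) ℂ)
    (hM : M = (γ0 : ℂ) • (∑ u', W u' * (W u')ᴴ) - vecMulVec v (star v))
    (e : ℝ → Fin Nt → ℂ)
    (he : ∀ x, e x = (star fr ⬝ᵥ u) • Matrix.vecMul (star u) (G x * M))
    (κ : ℝ → ℝ)
    (hκ : ∀ x, κ x = (star u ⬝ᵥ (G x * M * (G x)ᴴ).mulVec u).re
        + γ0 * σz2 * (star u ⬝ᵥ u).re)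
    (hne : t x₀ m ≠ s) :
    HasDerivAt κ
      (-(4 * Real.pi * ρs / lam) *
        (e x₀ m
          * Complex.exp (Complex.I * ((2 * Real.pi / lam : ℝ) : ℂ)
              * ((‖t x₀ m - s‖ : ℝ) : ℂ))
          * (((x₀ - s 0) / ‖t x₀ m - s‖ : ℝ) : ℂ)).im)
      x₀ := by
  have hr₀pos : (0:ℝ) < ‖t x₀ m - s‖ := by
    rw [norm_pos_iff]; exact sub_ne_zero.mpr hne
  set r₀ : ℝ := ‖t x₀ m - s‖ with hr₀def
  set c : ℝ := 2 * Real.pi / lam with hcdef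
  set d₀ : ℝ := (x₀ - s 0) / r₀ with hd₀def
  set φ₀ : ℂ := Complex.exp (Complex.I * (c:ℂ) * (r₀:ℂ)) with hφ₀def
  set C : ℝ := (t x₀ m 1 - s 1)^2 + (t x₀ m 2 - s 2)^2 with hCdef
  -- the norm as sqrt of a polynomial
  have hC : ∀ x, ‖t x m - s‖ = Real.sqrt ((x - s 0)^2 + C) := by
    intro x
    rw [EuclideanSpace.norm_eq, Fin.sum_univ_three]
    simp only [PiLp.sub_apply, Real.norm_eq_abs, sq_abs, htm0, htm1, htm2, hCdef]
    ring_nf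
  have hg : HasDerivAt (fun x : ℝ => (x - s 0)^2 + C) (2*(x₀ - s 0)) x₀ := by
    have := (((hasDerivAt_id x₀).sub_const (s 0)).pow 2).add_const C
    simpa using this
  have hgx : (x₀ - s 0)^2 + C = r₀^2 := by
    rw [hr₀def, hC x₀, Real.sq_sqrt (by positivity)]
  have hgne : (x₀ - s 0)^2 + C ≠ 0 := by
    rw [hgx]; positivity
  have hnorm : HasDerivAt (fun x => ‖t x m - s‖) d₀ x₀ := by
    have hfun : (fun x => ‖t x m - s‖) = fun x => Real.sqrt ((x - s 0)^2 + C) :=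
      funext hC
    rw [hfun]
    have h2 := hg.sqrt hgne
    convert h2 using 1
    rw [hgx, Real.sqrt_sq hr₀pos.le, hd₀def]
    field_simp
  -- derivative of ft entries
  set δ : ℂ := φ₀ * (Complex.I * (c:ℂ) * (d₀:ℂ)) with hδdef
  set D : Fin Nt → ℂ := fun j => if j = m then δ else 0 with hDdef
  have hftd : ∀ j, HasDerivAt (fun x => ft x j) (D j) x₀ := by
    intro j
    by_cases hj : j = m
    · rw [hj]
      have h1 : HasDerivAt (fun x : ℝ => Complex.I * (c:ℂ) * ((‖t x m - s‖ : ℝ):ℂ))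
          (Complex.I * (c:ℂ) * (d₀:ℂ)) x₀ := (hnorm.ofReal_comp).const_mul _
      have h2 := h1.cexp
      have hfun : (fun x => ft x m)
          = fun x => Complex.exp (Complex.I * (c:ℂ) * ((‖t x m - s‖:ℝ):ℂ)) :=
        funext fun x => hft x m
      rw [hfun]
      simpa [hDdef, hδdef, hφ₀def, mul_comm] using h2
    · have hfun : (fun x => ft x j) = fun _ => ft x₀ j :=
        funext fun x => by rw [hft, hft, htother x j hj]
      rw [hfun]
      simpa [hDdef, hj] using hasDerivAt_const x₀ (ft x₀ j)
  -- Hermitian property of M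
  have hMH' : Mᴴ = M := by
    rw [hM, conjTranspose_sub, conjTranspose_smul, conjTranspose_sum]
    congr 1
    · congr 1
      · simp [Complex.star_def, Complex.conj_ofReal]
      · exact Finset.sum_congr rfl fun u' _ => by
          rw [conjTranspose_mul, conjTranspose_conjTranspose]
    · exact conjT_vecMulVec' v v
  have hMH : ∀ j k, star (M j k) = M k j := by
    intro j k
    have h := congrFun (congrFun hMH' k) j
    rwa [conjTranspose_apply] at h
  -- the scalar quadratic form
  set q : ℝ → ℂ := fun x => ∑ j, ∑ k, star (ft x j) * M j k * ft x k with hqdef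
  set w : ℂ := ∑ j, star (ft x₀ j) * M j m with hwdef
  have hstarw : star w = ∑ k, M m k * ft x₀ k := by
    rw [hwdef, star_sum]
    refine Finset.sum_congr rfl fun k _ => ?_
    simp only [star_mul', star_star, hMH]
    ring
  have hqd : HasDerivAt q (star δ * star w + δ * w) x₀ := by
    have h1 : HasDerivAt q (∑ j, ∑ k, (star (D j) * M j k * ft x₀ k
        + star (ft x₀ j) * M j k * D k)) x₀ := by
      apply HasDerivAt.fun_sum
      intro j _
      apply HasDerivAt.fun_sum
      intro k _
      exact (((hftd j).star).mul_const (M j k)).mul (hftd k)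
    convert h1 using 1
    symm
    calc (∑ j, ∑ k, (star (D j) * M j k * ft x₀ k + star (ft x₀ j) * M j k * D k))
        = (∑ j, ∑ k, star (D j) * M j k * ft x₀ k)
          + (∑ j, ∑ k, star (ft x₀ j) * M j k * D k) := by
          rw [← Finset.sum_add_distrib]
          exact Finset.sum_congr rfl fun j _ => by rw [← Finset.sum_add_distrib]
      _ = star δ * star w + δ * w := by
          congr 1
          · rw [Finset.sum_eq_single m]
            · rw [hstarw, Finset.mul_sum]
              refine Finset.sum_congr rfl fun k _ => ?_
              simp [hDdef]
              ring
            · intro b _ hb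
              simp [hDdef, hb]
            · intro h
              exact absurd (Finset.mem_univ m) h
          · have h2 : ∀ j : Fin Nt, (∑ k, star (ft x₀ j) * M j k * D k)
                = star (ft x₀ j) * M j m * δ := by
              intro j
              rw [Finset.sum_eq_single m]
              · simp [hDdef]
              · intro b _ hb
                simp [hDdef, hb]
              · intro h
                exact absurd (Finset.mem_univ m) h
            rw [Finset.sum_congr rfl fun j _ => h2 j, ← Finset.sum_mul, hwdef]
            ring
  set a : ℂ := star u ⬝ᵥ fr with hadef
  set b : ℂ := star fr ⬝ᵥ u with hbdef
  have hab : a = star b := by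
    rw [hadef, hbdef, dotProduct, dotProduct, star_sum]
    refine Finset.sum_congr rfl fun i _ => ?_
    simp only [Pi.star_apply, star_mul', star_star]
    ring
  have hqform : ∀ x, star (ft x) ⬝ᵥ (M *ᵥ ft x) = q x := by
    intro x
    rw [hqdef]
    simp only [dotProduct, Matrix.mulVec, Pi.star_apply, Finset.mul_sum]
    exact Finset.sum_congr rfl fun j _ => Finset.sum_congr rfl fun k _ => by ring
  have hGH : ∀ x, (G x)ᴴ = (ρs:ℂ) • vecMulVec (ft x) (star fr) := by
    intro x
    rw [hG, conjTranspose_smul, conjT_vecMulVec']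
    congr 1
    simp [Complex.star_def, Complex.conj_ofReal]
  have hFV : ∀ x, star u ⬝ᵥ (G x * M * (G x)ᴴ) *ᵥ u = ((ρs:ℂ)^2 * a * b) * q x := by
    intro x
    rw [hGH, hG]
    rw [← Matrix.mulVec_mulVec, ← Matrix.mulVec_mulVec]
    simp only [Matrix.smul_mulVec, Matrix.mulVec_smul, vecMulVec_mulVec',
      dotProduct_smul, smul_eq_mul, smul_smul]
    rw [hqform x, ← hadef, ← hbdef]
    ring
  have h2 : (star (ft x₀) ᵥ* M) m = w := by
    rw [hwdef]
    simp only [Matrix.vecMul, dotProduct, Pi.star_apply]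
  have heB : e x₀ m = (ρs:ℂ) * a * b * w := by
    rw [he]
    have h1 : star u ᵥ* (G x₀ * M) = ((ρs:ℂ) * a) • (star (ft x₀) ᵥ* M) := by
      rw [← Matrix.vecMul_vecMul, hG, vecMul_smulMatrix', vecMul_vecMulVec',
        ← hadef, smul_smul, Matrix.smul_vecMul]
    rw [h1]
    simp only [Pi.smul_apply, smul_eq_mul, h2]
    ring
  have hκ2 : κ = fun x => (((ρs:ℂ)^2 * a * b) * q x).re + γ0 * σz2 * (star u ⬝ᵥ u).re :=
    funext fun x => by rw [hκ, hFV]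
  rw [hκ2]
  have hd1 : HasDerivAt (fun x => ((ρs:ℂ)^2 * a * b) * q x)
      (((ρs:ℂ)^2 * a * b) * (star δ * star w + δ * w)) x₀ := hqd.const_mul _
  have hd2 : HasDerivAt (fun x => (((ρs:ℂ)^2 * a * b) * q x).re)
      ((((ρs:ℂ)^2 * a * b) * (star δ * star w + δ * w)).re) x₀ := by
    have := Complex.reCLM.hasFDerivAt.comp_hasDerivAt x₀ hd1
    exact this
  have hd3 := hd2.add_const (γ0 * σz2 * (star u ⬝ᵥ u).re)
  convert hd3 using 1
  · rfl
  · rfl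
  rw [heB, hab, hδdef, hcdef]
  rw [show ((ρs:ℂ)^2 : ℂ) = ((ρs^2 : ℝ) : ℂ) by push_cast; ring]
  simp only [Complex.mul_re, Complex.mul_im, Complex.add_re, Complex.add_im,
    Complex.star_def, Complex.conj_re, Complex.conj_im, Complex.I_re, Complex.I_im,
    Complex.ofReal_re, Complex.ofReal_im]
  field_simp
  ring
end
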